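/- Let γ, δ, ρ ∈ ℝ and let θ̃, ψ̃ : ℝ → ℝ be differentiable functions satisfying θ̃' = γ cos θ̃ sin ψ̃ cos ψ̃ and ψ̃' = −(1+δ)ρ + sin θ̃·(γ sin²ψ̃ − δ). Then the function Ẽ(τ) = ½·( (1 + γ sin²ψ̃(τ))·cos²θ̃(τ) + (1+δ)·(ρ + sin θ̃(τ))² ) is constant. In particular, along the solution with θ̃(0) = ψ̃(0) = 0 the constant value is Ẽ = ½(1 + ρ·ρ̂) with ρ̂ = ρ(1+δ). -/

import Mathlib

open Real

theorem alternate_energy_conserved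
    (γ δ ρ ρh : ℝ) (hρh : ρh = ρ * (1 + δ)) (θ ψ : ℝ → ℝ)
    (hθ' : ∀ τ, HasDerivAt θ
      (γ * Real.cos (θ τ) * Real.sin (ψ τ) * Real.cos (ψ τ)) τ)
    (hψ' : ∀ τ, HasDerivAt ψ
      (-(1 + δ) * ρ + Real.sin (θ τ) * (γ * Real.sin (ψ τ) ^ 2 - δ)) τ) :
    (∀ τ₁ τ₂ : ℝ,
      (1 / 2) * ((1 + γ * Real.sin (ψ τ₁) ^ 2) * Real.cos (θ τ₁) ^ 2
          + (1 + δ) * (ρ + Real.sin (θ τ₁)) ^ 2)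
      = (1 / 2) * ((1 + γ * Real.sin (ψ τ₂) ^ 2) * Real.cos (θ τ₂) ^ 2
          + (1 + δ) * (ρ + Real.sin (θ τ₂)) ^ 2))
    ∧ (θ 0 = 0 → ψ 0 = 0 →
        ∀ τ : ℝ,
          (1 / 2) * ((1 + γ * Real.sin (ψ τ) ^ 2) * Real.cos (θ τ) ^ 2
              + (1 + δ) * (ρ + Real.sin (θ τ)) ^ 2)
            = (1 / 2) * (1 + ρ * ρh)) := by
  set E : ℝ → ℝ := fun τ =>
    (1 / 2) * ((1 + γ * Real.sin (ψ τ) ^ 2) * Real.cos (θ τ) ^ 2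
      + (1 + δ) * (ρ + Real.sin (θ τ)) ^ 2) with hE
  have H : ∀ τ, HasDerivAt E 0 τ := by
    intro τ
    have hsψ := (hψ' τ).sin
    have hsθ := (hθ' τ).sin
    have hcθ := (hθ' τ).cos
    have h : HasDerivAt E _ τ := (((((hsψ.fun_pow 2).const_mul γ).const_add 1).fun_mul (hcθ.fun_pow 2)).fun_add
      (((hsθ.const_add ρ).fun_pow 2).const_mul (1 + δ))).const_mul (1 / 2)
    convert h using 1
    ring
  have hconst : ∀ τ₁ τ₂, E τ₁ = E τ₂ := fun a b =>
    is_const_of_deriv_eq_zero (fun x => (H x).differentiableAt)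
      (fun x => (H x).deriv) a b
  refine ⟨hconst, fun h0 h0' τ => ?_⟩
  have := hconst τ 0
  rw [hE] at this
  simp only [h0, h0', Real.sin_zero, Real.cos_zero] at this
  rw [this, hρh]; ring
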